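/- arXiv:1603.01375 — 3 statements merged into one kernel-verified Lean document; each statement's English description precedes it below -/
import Mathlib

section
/- Let S = ∞ and m satisfy (M), and let 0 < δ ≤ δ' < sup_{z>0} m(z). Then: (i) the equation m(z) = δ has a unique solution z_δ > 0, and z_δ ≤ z_{δ'}; (ii) the approximated mobility m_δ(z) := m(z + z_δ) − δ satisfies m_δ(z) > 0 for z > 0, lim_{z→0⁺} m_δ(z) = 0 and m_δ''(z) ≤ 0 on (0,∞); (iii) m_{δ'}(z) ≤ m_δ(z) ≤ m(z) and m_δ'(z) ≤ m'(z) for all z > 0; (iv) consequently f(z) ≤ f_δ(z) ≤ f_{δ'}(z) for all z ≥ 0, where f_δ(z) := ∫₀^z √(2/m_δ(r)) dr. -/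
open MeasureTheory Set Filter Topology

namespace ApproxMob

variable {m : ℝ → ℝ}

lemma diffAt (hm_c2 : ContDiffOn ℝ 2 m (Ioi 0)) {x : ℝ} (hx : 0 < x) :
    DifferentiableAt ℝ m x :=
  (hm_c2.differentiableOn (by norm_num)).differentiableAt (Ioi_mem_nhds hx)

lemma contDeriv (hm_c2 : ContDiffOn ℝ 2 m (Ioi 0)) :
    ContDiffOn ℝ 1 (deriv m) (Ioi 0) :=
  hm_c2.deriv_of_isOpen isOpen_Ioi (by norm_num)

lemma deriv_anti (hm_c2 : ContDiffOn ℝ 2 m (Ioi 0))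
    (hm_conc : ∀ z : ℝ, 0 < z → deriv (deriv m) z ≤ 0) :
    AntitoneOn (deriv m) (Ioi 0) := by
  apply antitoneOn_of_deriv_nonpos (convex_Ioi 0) (contDeriv hm_c2).continuousOn
  · rw [interior_Ioi]; exact (contDeriv hm_c2).differentiableOn (by norm_num)
  · rw [interior_Ioi]; exact fun x hx => hm_conc x hx

lemma deriv_nonneg (hm_c2 : ContDiffOn ℝ 2 m (Ioi 0))
    (hm_pos : ∀ z : ℝ, 0 < z → 0 < m z)
    (hm_conc : ∀ z : ℝ, 0 < z → deriv (deriv m) z ≤ 0)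
    {x : ℝ} (hx : 0 < x) : 0 ≤ deriv m x := by
  by_contra h
  push_neg at h
  set c : ℝ := -deriv m x with hc
  have hcpos : 0 < c := by simp [hc]; linarith
  have hanti : AntitoneOn (fun z => m z + c * z) (Ici x) := by
    apply antitoneOn_of_deriv_nonpos (convex_Ici x)
    · exact (hm_c2.continuousOn.mono (fun y hy => lt_of_lt_of_le hx hy)).add
        (continuous_const.mul continuous_id).continuousOn
    · rw [interior_Ici]
      exact fun z hz => ((diffAt hm_c2 (hx.trans hz)).add
        ((differentiableAt_id.const_mul c))).differentiableWithinAt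
    · rw [interior_Ici]
      intro z hz
      have hz0 : 0 < z := hx.trans hz
      have hd : HasDerivAt (fun z => m z + c * z) (deriv m z + c * 1) z :=
        ((diffAt hm_c2 hz0).hasDerivAt).add ((hasDerivAt_id z).const_mul c)
      rw [hd.deriv]
      have := deriv_anti hm_c2 hm_conc hx hz0 (le_of_lt hz)
      linarith
  set y : ℝ := x + m x / c + 1 with hy
  have hxy : x ≤ y := by
    have : 0 < m x / c := div_pos (hm_pos x hx) hcpos
    simp [hy]; linarith
  have h2 := hanti (self_mem_Ici) hxy hxy
  have h3 : m x / c * c = m x := div_mul_cancel₀ _ (ne_of_gt hcpos)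
  have h4 := hm_pos y (by linarith [div_pos (hm_pos x hx) hcpos])
  simp only [hy] at h2 h4
  nlinarith

lemma mono (hm_c2 : ContDiffOn ℝ 2 m (Ioi 0))
    (hm_pos : ∀ z : ℝ, 0 < z → 0 < m z)
    (hm_conc : ∀ z : ℝ, 0 < z → deriv (deriv m) z ≤ 0) :
    MonotoneOn m (Ioi 0) := by
  apply monotoneOn_of_deriv_nonneg (convex_Ioi 0) hm_c2.continuousOn
  · rw [interior_Ioi]; exact hm_c2.differentiableOn (by norm_num)
  · rw [interior_Ioi]; exact fun x hx => deriv_nonneg hm_c2 hm_pos hm_conc hx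

lemma exists_unique_root (hm_c2 : ContDiffOn ℝ 2 m (Ioi 0))
    (hm_pos : ∀ z : ℝ, 0 < z → 0 < m z)
    (hm_conc : ∀ z : ℝ, 0 < z → deriv (deriv m) z ≤ 0)
    (hm0 : Tendsto m (𝓝[>] (0 : ℝ)) (𝓝 0))
    {δ : ℝ} (hδ : 0 < δ) (hsup : ∃ z : ℝ, 0 < z ∧ δ < m z) :
    ∃ zδ : ℝ, 0 < zδ ∧ m zδ = δ ∧ ∀ z : ℝ, 0 < z → m z = δ → z = zδ := by
  obtain ⟨z₀, hz₀, hz₀δ⟩ := hsup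
  have hmono := mono hm_c2 hm_pos hm_conc
  have h1 : ∀ᶠ a in 𝓝[>] (0:ℝ), m a < δ := hm0.eventually_lt_const hδ
  have h2 : ∀ᶠ a in 𝓝[>] (0:ℝ), a ∈ Ioo (0:ℝ) z₀ :=
    eventually_of_mem (Ioo_mem_nhdsGT_of_mem ⟨le_refl 0, hz₀⟩) (fun a ha => ha)
  obtain ⟨a, ham, haz⟩ := (h1.and h2).exists
  have hIcc : Icc a z₀ ⊆ Ioi (0:ℝ) := fun x hx => lt_of_lt_of_le haz.1 hx.1
  have hIVT := intermediate_value_Icc haz.2.le (hm_c2.continuousOn.mono hIcc)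
  obtain ⟨zδ, hzδmem, hzδval⟩ := hIVT ⟨ham.le, hz₀δ.le⟩
  have hzδpos : 0 < zδ := lt_of_lt_of_le haz.1 hzδmem.1
  refine ⟨zδ, hzδpos, hzδval, ?_⟩
  have key : ∀ u v : ℝ, 0 < u → u < v → m u = δ → m v = δ → False := by
    intro u v hu huv hmu hmv
    have hv : 0 < v := hu.trans huv
    have hconst : ∀ x ∈ Ioo u v, m x = δ := by
      intro x hx
      have hx0 : 0 < x := hu.trans hx.1
      have l1 := hmono (mem_Ioi.mpr hu) (mem_Ioi.mpr hx0) hx.1.le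
      have l2 := hmono (mem_Ioi.mpr hx0) (mem_Ioi.mpr hv) hx.2.le
      rw [hmu] at l1; rw [hmv] at l2; linarith
    set t : ℝ := (u + v) / 2 with hts
    have htmem : t ∈ Ioo u v := ⟨by simp [hts]; linarith, by simp [hts]; linarith⟩
    have ht0 : 0 < t := hu.trans htmem.1
    have hd0 : deriv m t = 0 := by
      have hev : m =ᶠ[𝓝 t] fun _ => δ :=
        eventually_of_mem (Ioo_mem_nhds htmem.1 htmem.2) hconst
      rw [hev.deriv_eq, deriv_const]
    have hantiIci : AntitoneOn m (Ici t) := by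
      apply antitoneOn_of_deriv_nonpos (convex_Ici t)
        (hm_c2.continuousOn.mono (fun y hy => lt_of_lt_of_le ht0 hy))
      · rw [interior_Ici]
        exact fun w hw => (diffAt hm_c2 (ht0.trans hw)).differentiableWithinAt
      · rw [interior_Ici]
        intro w hw
        have := deriv_anti hm_c2 hm_conc (mem_Ioi.mpr ht0) (mem_Ioi.mpr (ht0.trans hw)) hw.le
        rw [hd0] at this; exact this
    have hmt : m t = δ := hconst t htmem
    rcases le_total z₀ t with h | h
    · have := hmono (mem_Ioi.mpr hz₀) (mem_Ioi.mpr ht0) h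
      linarith
    · have := hantiIci self_mem_Ici h h
      linarith
  intro z hz hmz
  rcases lt_trichotomy z zδ with h | h | h
  · exact absurd (key z zδ hz h hmz hzδval) (fun hf => hf)
  · exact h
  · exact absurd (key zδ z hzδpos h hzδval hmz) (fun hf => hf)

lemma deriv_shift (c d : ℝ) :
    deriv (fun x => m (x + c) - d) = fun x => deriv m (x + c) := by
  funext x
  rw [deriv_sub_const, deriv_comp_add_const]

lemma deriv2_shift (c d : ℝ) {z : ℝ} :
    deriv (deriv (fun x => m (x + c) - d)) z = deriv (deriv m) (z + c) := by
  rw [deriv_shift, deriv_comp_add_const]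

lemma diffAt_shift (hm_c2 : ContDiffOn ℝ 2 m (Ioi 0)) {c x : ℝ} (hx : 0 < x + c) :
    DifferentiableAt ℝ (fun y => m (y + c)) x :=
  DifferentiableAt.comp x (diffAt hm_c2 hx) (differentiableAt_id.add_const c)

lemma incr_anti (hm_c2 : ContDiffOn ℝ 2 m (Ioi 0))
    (hm_conc : ∀ z : ℝ, 0 < z → deriv (deriv m) z ≤ 0)
    {h : ℝ} (hh : 0 ≤ h) :
    AntitoneOn (fun x => m (x + h) - m x) (Ioi 0) := by
  apply antitoneOn_of_deriv_nonpos (convex_Ioi 0)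
  · exact ((hm_c2.continuousOn.comp ((continuous_id.add continuous_const).continuousOn)
      (fun x hx => by simp only [mem_Ioi, id_eq, Pi.add_apply] at *; linarith)).sub hm_c2.continuousOn)
  · rw [interior_Ioi]
    intro x hx
    exact ((diffAt_shift hm_c2 (by simp only [mem_Ioi] at hx; linarith)).sub
      (diffAt hm_c2 hx)).differentiableWithinAt
  · rw [interior_Ioi]
    intro x hx
    rw [mem_Ioi] at hx
    have hxh : 0 < x + h := by linarith
    rw [deriv_fun_sub (diffAt_shift hm_c2 hxh) (diffAt hm_c2 hx), deriv_comp_add_const]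
    have := deriv_anti hm_c2 hm_conc (mem_Ioi.mpr hx) (mem_Ioi.mpr hxh) (by linarith)
    linarith

lemma concave (hm_c2 : ContDiffOn ℝ 2 m (Ioi 0))
    (hm_conc : ∀ z : ℝ, 0 < z → deriv (deriv m) z ≤ 0) :
    ConcaveOn ℝ (Ioi 0) m := by
  apply concaveOn_of_deriv2_nonpos (convex_Ioi 0) hm_c2.continuousOn
  · rw [interior_Ioi]; exact hm_c2.differentiableOn (by norm_num)
  · rw [interior_Ioi]; exact (contDeriv hm_c2).differentiableOn (by norm_num)
  · rw [interior_Ioi]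
    intro x hx
    have hiter : deriv^[2] m x = deriv (deriv m) x := rfl
    rw [hiter]
    exact hm_conc x hx

lemma concave_shift {c d : ℝ} (hm : ConcaveOn ℝ (Ioi 0) m) (hc : 0 ≤ c) :
    ConcaveOn ℝ (Ioi 0) (fun x => m (x + c) - d) := by
  refine ⟨convex_Ioi 0, ?_⟩
  intro x hx y hy a b ha hb hab
  rw [mem_Ioi] at hx hy
  have hx' : x + c ∈ Ioi 0 := mem_Ioi.mpr (by linarith)
  have hy' : y + c ∈ Ioi 0 := mem_Ioi.mpr (by linarith)
  have h := hm.2 hx' hy' ha hb hab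
  simp only [smul_eq_mul] at h ⊢
  have hcomb : a * (x + c) + b * (y + c) = a * x + b * y + c := by
    linear_combination c * hab
  rw [hcomb] at h
  have hd : a * d + b * d = d := by linear_combination d * hab
  nlinarith [h, hd]

lemma concave_lb {g : ℝ → ℝ} (hg : ConcaveOn ℝ (Ioi 0) g)
    (hgpos : ∀ x : ℝ, 0 < x → 0 < g x)
    {r z : ℝ} (hr : 0 < r) (hrz : r < z) : r / (2 * z) * g z ≤ g r := by
  have hz : 0 < z := hr.trans hrz
  have hden : 0 < z - r / 2 := by linarith
  set a : ℝ := (z - r) / (z - r / 2) with hadef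
  set b : ℝ := (r / 2) / (z - r / 2) with hbdef
  have ha : 0 ≤ a := div_nonneg (by linarith) hden.le
  have hb : 0 ≤ b := div_nonneg (by linarith) hden.le
  have hne : z - r / 2 ≠ 0 := ne_of_gt hden
  have hab : a + b = 1 := by
    rw [hadef, hbdef, ← add_div, div_eq_one_iff_eq hne]; ring
  have hcomb : a * (r / 2) + b * z = r := by
    rw [hadef, hbdef, div_mul_eq_mul_div, div_mul_eq_mul_div, ← add_div,
      div_eq_iff hne]; ring
  have h := hg.2 (mem_Ioi.mpr (by linarith : (0:ℝ) < r / 2)) (mem_Ioi.mpr hz) ha hb hab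
  simp only [smul_eq_mul] at h
  rw [hcomb] at h
  have h1 : 0 ≤ a * g (r / 2) := mul_nonneg ha (hgpos _ (by linarith)).le
  have h2 : r / (2 * z) ≤ b := by
    rw [hbdef, div_le_div_iff₀ (by positivity) hden]
    nlinarith
  have h3 : r / (2 * z) * g z ≤ b * g z :=
    mul_le_mul_of_nonneg_right h2 (hgpos z hz).le
  linarith

lemma integrable_inv_sqrt {z : ℝ} (hz : 0 < z) :
    IntegrableOn (fun r => (Real.sqrt r)⁻¹) (Ioo 0 z) := by
  have h : IntervalIntegrable (fun x : ℝ => x ^ (-(1/2) : ℝ)) volume 0 z :=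
    intervalIntegral.intervalIntegrable_rpow' (by norm_num)
  have h2 : IntegrableOn (fun x : ℝ => x ^ (-(1/2) : ℝ)) (Ioc 0 z) :=
    (intervalIntegrable_iff_integrableOn_Ioc_of_le hz.le).mp h
  refine (h2.mono_set Ioo_subset_Ioc_self).congr_fun ?_ measurableSet_Ioo
  intro x hx
  show x ^ (-(1/2) : ℝ) = (Real.sqrt x)⁻¹
  rw [Real.rpow_neg hx.1.le, Real.sqrt_eq_rpow]

lemma integrable_sqrt_two_div {g : ℝ → ℝ} {z C : ℝ} (hz : 0 < z) (hC : 0 < C)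
    (hcont : ContinuousOn g (Ioo 0 z))
    (hgpos : ∀ r ∈ Ioo (0:ℝ) z, 0 < g r)
    (hlb : ∀ r ∈ Ioo (0:ℝ) z, r / (2 * z) * C ≤ g r) :
    IntegrableOn (fun r => Real.sqrt (2 / g r)) (Ioo 0 z) := by
  set K : ℝ := 4 * z / C with hK
  have hKpos : 0 < K := by positivity
  have hB : IntegrableOn (fun r => Real.sqrt K * (Real.sqrt r)⁻¹) (Ioo 0 z) :=
    (integrable_inv_sqrt hz).const_mul _
  apply Integrable.mono' hB
  · exact (Real.continuous_sqrt.comp_continuousOn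
      (continuousOn_const.div hcont (fun r hr => (hgpos r hr).ne'))).aestronglyMeasurable
      measurableSet_Ioo
  · filter_upwards [ae_restrict_mem measurableSet_Ioo] with r hr
    rw [Real.norm_eq_abs, abs_of_nonneg (Real.sqrt_nonneg _)]
    have hr0 : 0 < r := hr.1
    have hglb : r / (2 * z) * C ≤ g r := hlb r hr
    have hglb0 : 0 < r / (2 * z) * C := by positivity
    have step1 : 2 / g r ≤ 2 / (r / (2 * z) * C) :=
      div_le_div_of_nonneg_left (by norm_num) hglb0 hglb
    have step2 : 2 / (r / (2 * z) * C) = K / r := by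
      rw [hK]; field_simp; ring
    have step3 : Real.sqrt (2 / g r) ≤ Real.sqrt (K / r) := by
      rw [← step2]; exact Real.sqrt_le_sqrt step1
    calc Real.sqrt (2 / g r) ≤ Real.sqrt (K / r) := step3
      _ = Real.sqrt K * (Real.sqrt r)⁻¹ := by
          rw [Real.sqrt_div hKpos.le, div_eq_mul_inv]

end ApproxMob

open ApproxMob in
/-- Let `S = ∞`, `m` satisfy (M), and `0 < δ ≤ δ' < sup_{z>0} m(z)`. Then:
(i) `m(z) = δ` has a unique solution `z_δ > 0`, and `z_δ ≤ z_{δ'}`;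
(ii) `m_δ(z) := m(z + z_δ) − δ` satisfies `m_δ > 0` on `(0,∞)`, `m_δ(z) → 0` as `z → 0⁺`
and `m_δ'' ≤ 0` on `(0,∞)`;
(iii) `m_{δ'}(z) ≤ m_δ(z) ≤ m(z)` and `m_δ'(z) ≤ m'(z)` for all `z > 0`;
(iv) consequently `f(z) ≤ f_δ(z) ≤ f_{δ'}(z)` for all `z ≥ 0`, where
`f_δ(z) := ∫₀^z √(2/m_δ(r)) dr`. -/
theorem approximated_mobility_properties
    (m : ℝ → ℝ)
    (hm_c2 : ContDiffOn ℝ 2 m (Ioi 0))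
    (hm_pos : ∀ z : ℝ, 0 < z → 0 < m z)
    (hm_conc : ∀ z : ℝ, 0 < z → deriv (deriv m) z ≤ 0)
    (hm0 : Tendsto m (𝓝[>] (0 : ℝ)) (𝓝 0))
    (δ δ' : ℝ) (hδ : 0 < δ) (hδδ' : δ ≤ δ')
    (hδ'sup : ∃ z : ℝ, 0 < z ∧ δ' < m z) :
    ∃ zδ zδ' : ℝ,
      (0 < zδ ∧ m zδ = δ ∧ ∀ z : ℝ, 0 < z → m z = δ → z = zδ) ∧
      (0 < zδ' ∧ m zδ' = δ' ∧ ∀ z : ℝ, 0 < z → m z = δ' → z = zδ') ∧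
      zδ ≤ zδ' ∧
      (∀ z : ℝ, 0 < z → 0 < m (z + zδ) - δ) ∧
      Tendsto (fun z => m (z + zδ) - δ) (𝓝[>] (0 : ℝ)) (𝓝 0) ∧
      (∀ z : ℝ, 0 < z → deriv (deriv (fun x => m (x + zδ) - δ)) z ≤ 0) ∧
      (∀ z : ℝ, 0 < z →
        m (z + zδ') - δ' ≤ m (z + zδ) - δ ∧
        m (z + zδ) - δ ≤ m z ∧
        deriv (fun x => m (x + zδ) - δ) z ≤ deriv m z) ∧
      (∀ z : ℝ, 0 ≤ z →
        (∫ r in Ioo (0 : ℝ) z, Real.sqrt (2 / m r)) ≤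
          (∫ r in Ioo (0 : ℝ) z, Real.sqrt (2 / (m (r + zδ) - δ))) ∧
        (∫ r in Ioo (0 : ℝ) z, Real.sqrt (2 / (m (r + zδ) - δ))) ≤
          (∫ r in Ioo (0 : ℝ) z, Real.sqrt (2 / (m (r + zδ') - δ')))) := by
  obtain ⟨z₀, hz₀, hz₀δ'⟩ := hδ'sup
  have hδ'pos : 0 < δ' := lt_of_lt_of_le hδ hδδ'
  obtain ⟨zδ, hzδpos, hzδval, huniqδ⟩ :=
    exists_unique_root hm_c2 hm_pos hm_conc hm0 hδ ⟨z₀, hz₀, lt_of_le_of_lt hδδ' hz₀δ'⟩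
  obtain ⟨zδ', hzδ'pos, hzδ'val, huniqδ'⟩ :=
    exists_unique_root hm_c2 hm_pos hm_conc hm0 hδ'pos ⟨z₀, hz₀, hz₀δ'⟩
  have hmono := mono hm_c2 hm_pos hm_conc
  have hanti := deriv_anti hm_c2 hm_conc
  have hle : zδ ≤ zδ' := by
    by_contra hlt
    push_neg at hlt
    have h1 : m zδ' ≤ m zδ := hmono (mem_Ioi.mpr hzδ'pos) (mem_Ioi.mpr hzδpos) hlt.le
    rw [hzδval, hzδ'val] at h1
    have hδeq : δ = δ' := le_antisymm hδδ' h1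
    have heq := huniqδ zδ' hzδ'pos (by rw [hzδ'val, hδeq])
    exact absurd heq (ne_of_lt hlt)
  -- positivity of the approximated mobilities
  have hposgen : ∀ (c d : ℝ), 0 < c → m c = d →
      (∀ w : ℝ, 0 < w → m w = d → w = c) → ∀ z : ℝ, 0 < z → 0 < m (z + c) - d := by
    intro c d hc hmc huniq z hz
    have h1 : m c ≤ m (z + c) :=
      hmono (mem_Ioi.mpr hc) (mem_Ioi.mpr (by linarith)) (by linarith)
    rw [hmc] at h1
    rcases eq_or_lt_of_le h1 with he | hl
    · exfalso
      have := huniq (z + c) (by linarith) he.symm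
      linarith
    · linarith
  have hposδ : ∀ z : ℝ, 0 < z → 0 < m (z + zδ) - δ :=
    hposgen zδ δ hzδpos hzδval huniqδ
  have hposδ' : ∀ z : ℝ, 0 < z → 0 < m (z + zδ') - δ' :=
    hposgen zδ' δ' hzδ'pos hzδ'val huniqδ'
  -- tendsto of shifted m
  have htendm : ∀ c : ℝ, 0 < c →
      Tendsto (fun z : ℝ => m (z + c)) (𝓝[>] (0:ℝ)) (𝓝 (m c)) := by
    intro c hc
    have h1 : Tendsto (fun z : ℝ => z + c) (𝓝[>] (0:ℝ)) (𝓝 c) := by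
      have h0 : Tendsto (fun z : ℝ => z + c) (𝓝 (0:ℝ)) (𝓝 (0 + c)) :=
        (continuous_id.add continuous_const).tendsto 0
      rw [zero_add] at h0
      exact h0.mono_left nhdsWithin_le_nhds
    exact ((hm_c2.continuousOn.continuousAt (Ioi_mem_nhds hc)).tendsto).comp h1
  have htendδ : Tendsto (fun z => m (z + zδ) - δ) (𝓝[>] (0:ℝ)) (𝓝 0) := by
    have h1 := (htendm zδ hzδpos).sub_const δ
    rw [hzδval, sub_self] at h1
    exact h1
  -- second derivative of shifted m
  have hderiv2 : ∀ z : ℝ, 0 < z → deriv (deriv (fun x => m (x + zδ) - δ)) z ≤ 0 := by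
    intro z hz
    rw [deriv2_shift]
    exact hm_conc _ (by linarith)
  -- part (iii)
  have hiii : ∀ z : ℝ, 0 < z →
      m (z + zδ') - δ' ≤ m (z + zδ) - δ ∧
      m (z + zδ) - δ ≤ m z ∧
      deriv (fun x => m (x + zδ) - δ) z ≤ deriv m z := by
    intro z hz
    refine ⟨?_, ?_, ?_⟩
    · have hinc := incr_anti hm_c2 hm_conc (show (0:ℝ) ≤ zδ' - zδ by linarith)
      have h := hinc (mem_Ioi.mpr hzδpos) (mem_Ioi.mpr (by linarith : (0:ℝ) < z + zδ))
        (by linarith)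
      simp only [show z + zδ + (zδ' - zδ) = z + zδ' from by ring,
        show zδ + (zδ' - zδ) = zδ' from by ring, hzδval, hzδ'val] at h
      linarith
    · have hinc := incr_anti hm_c2 hm_conc hzδpos.le
      have hev : ∀ᶠ ε in 𝓝[>] (0:ℝ), m (z + zδ) - m z ≤ m (ε + zδ) - m ε := by
        filter_upwards [Ioc_mem_nhdsGT_of_mem ⟨le_refl 0, hz⟩] with ε hε
        have h := hinc (mem_Ioi.mpr hε.1) (mem_Ioi.mpr hz) hε.2
        simpa using h
      have htend2 : Tendsto (fun ε => m (ε + zδ) - m ε) (𝓝[>] (0:ℝ)) (𝓝 (δ - 0)) := by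
        have h1 := htendm zδ hzδpos
        rw [hzδval] at h1
        exact h1.sub hm0
      have := ge_of_tendsto htend2 hev
      linarith
    · have he : deriv (fun x => m (x + zδ) - δ) z = deriv m (z + zδ) := by
        rw [deriv_shift]
      rw [he]
      exact hanti (mem_Ioi.mpr hz) (mem_Ioi.mpr (by linarith)) (by linarith)
  -- part (iv)
  have hiv : ∀ z : ℝ, 0 ≤ z →
      (∫ r in Ioo (0 : ℝ) z, Real.sqrt (2 / m r)) ≤
        (∫ r in Ioo (0 : ℝ) z, Real.sqrt (2 / (m (r + zδ) - δ))) ∧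
      (∫ r in Ioo (0 : ℝ) z, Real.sqrt (2 / (m (r + zδ) - δ))) ≤
        (∫ r in Ioo (0 : ℝ) z, Real.sqrt (2 / (m (r + zδ') - δ'))) := by
    intro z hz0
    rcases hz0.eq_or_lt with rfl | hz
    · simp
    · have hconcm := concave hm_c2 hm_conc
      have hconcδ' : ConcaveOn ℝ (Ioi 0) (fun x => m (x + zδ') - δ') :=
        concave_shift hconcm hzδ'pos.le
      set C : ℝ := m (z + zδ') - δ' with hC
      have hCpos : 0 < C := hposδ' z hz
      have hlb : ∀ r ∈ Ioo (0:ℝ) z, r / (2 * z) * C ≤ m (r + zδ') - δ' := by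
        intro r hr
        exact concave_lb hconcδ' (fun x hx => hposδ' x hx) hr.1 hr.2
      have hchain : ∀ r ∈ Ioo (0:ℝ) z,
          m (r + zδ') - δ' ≤ m (r + zδ) - δ ∧ m (r + zδ) - δ ≤ m r :=
        fun r hr => ⟨(hiii r hr.1).1, (hiii r hr.1).2.1⟩
      have hmaps : ∀ c : ℝ, 0 ≤ c → MapsTo (fun r : ℝ => r + c) (Ioo 0 z) (Ioi 0) := by
        intro c hcn r hr
        simp only [mem_Ioi]
        have := hr.1
        linarith [hr.1]
      have hcontm : ContinuousOn m (Ioo 0 z) :=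
        hm_c2.continuousOn.mono (fun r hr => hr.1)
      have hcontδ : ContinuousOn (fun r : ℝ => m (r + zδ) - δ) (Ioo 0 z) :=
        ((hm_c2.continuousOn.comp ((continuous_id.add continuous_const).continuousOn)
          (fun r hr => by simp only [mem_Ioi, id_eq, Pi.add_apply]; linarith [hr.1])).sub continuousOn_const)
      have hcontδ' : ContinuousOn (fun r : ℝ => m (r + zδ') - δ') (Ioo 0 z) :=
        ((hm_c2.continuousOn.comp ((continuous_id.add continuous_const).continuousOn)
          (fun r hr => by simp only [mem_Ioi, id_eq, Pi.add_apply]; linarith [hr.1])).sub continuousOn_const)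
      have hint0 : IntegrableOn (fun r => Real.sqrt (2 / m r)) (Ioo 0 z) :=
        integrable_sqrt_two_div hz hCpos hcontm (fun r hr => hm_pos r hr.1)
          (fun r hr => le_trans (le_trans (hlb r hr) (hchain r hr).1) (hchain r hr).2)
      have hintδ : IntegrableOn (fun r => Real.sqrt (2 / (m (r + zδ) - δ))) (Ioo 0 z) :=
        integrable_sqrt_two_div hz hCpos hcontδ (fun r hr => hposδ r hr.1)
          (fun r hr => le_trans (hlb r hr) (hchain r hr).1)
      have hintδ' : IntegrableOn (fun r => Real.sqrt (2 / (m (r + zδ') - δ'))) (Ioo 0 z) :=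
        integrable_sqrt_two_div hz hCpos hcontδ' (fun r hr => hposδ' r hr.1) hlb
      constructor
      · apply setIntegral_mono_on hint0 hintδ measurableSet_Ioo
        intro r hr
        apply Real.sqrt_le_sqrt
        exact div_le_div_of_nonneg_left (by norm_num) (hposδ r hr.1) (hchain r hr).2
      · apply setIntegral_mono_on hintδ hintδ' measurableSet_Ioo
        intro r hr
        apply Real.sqrt_le_sqrt
        exact div_le_div_of_nonneg_left (by norm_num) (hposδ' r hr.1) (hchain r hr).1
  exact ⟨zδ, zδ', ⟨hzδpos, hzδval, huniqδ⟩, ⟨hzδ'pos, hzδ'val, huniqδ'⟩, hle,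
    hposδ, htendδ, hderiv2, hiii, hiv⟩
end

section
/- Let S = ∞ and m satisfy (M), and for δ ∈ (0, δ̄) with δ̄ < sup m define z_δ as the unique solution of m(z) = δ, m_δ(z) := m(z + z_δ) − δ, f_δ(z) := ∫₀^z √(2/m_δ(r)) dr, and g_δ := f_δ^{−1} : [0,∞) → [0,∞). Then there exists a constant C > 0, independent of δ, such that g_δ(w) ≤ e^{Cw} − 1 for all w ≥ 0 and all δ ∈ (0, δ̄). -/
open MeasureTheory Set Filter Topology

/-- Let `S = ∞`, `m` satisfy (M), and for `δ ∈ (0,δ̄)` with `δ̄ < sup m`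
let `z_δ` be the unique solution of `m(z) = δ`, `m_δ(z) := m(z + z_δ) − δ`,
`f_δ(z) := ∫₀^z √(2/m_δ(r)) dr` and `g_δ := f_δ⁻¹ : [0,∞) → [0,∞)`. Then there is a
constant `C > 0`, independent of `δ`, with `g_δ(w) ≤ e^{Cw} − 1` for all `w ≥ 0` and
all `δ ∈ (0,δ̄)`. -/
theorem gronwall_bound_on_inverse
    (m : ℝ → ℝ)
    (hm_c2 : ContDiffOn ℝ 2 m (Ioi 0))
    (hm_pos : ∀ z : ℝ, 0 < z → 0 < m z)
    (hm_conc : ∀ z : ℝ, 0 < z → deriv (deriv m) z ≤ 0)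
    (hm0 : Tendsto m (𝓝[>] (0 : ℝ)) (𝓝 0))
    (δbar : ℝ) (hδbar : 0 < δbar)
    (hδbarsup : ∃ z : ℝ, 0 < z ∧ δbar < m z) :
    ∃ C : ℝ, 0 < C ∧
      ∀ δ ∈ Ioo (0 : ℝ) δbar, ∀ zδ : ℝ, 0 < zδ → m zδ = δ →
        ∀ g : ℝ → ℝ,
          (∀ z : ℝ, 0 ≤ z →
            g (∫ r in Ioo (0 : ℝ) z, Real.sqrt (2 / (m (r + zδ) - δ))) = z) →
          (∀ w : ℝ, 0 ≤ w → 0 ≤ g w ∧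
            (∫ r in Ioo (0 : ℝ) (g w), Real.sqrt (2 / (m (r + zδ) - δ))) = w) →
          ∀ w : ℝ, 0 ≤ w → g w ≤ Real.exp (C * w) - 1 := by
  obtain ⟨zs, hzs0, hmzs⟩ := hδbarsup
  have hconv : Convex ℝ (Ioi (0:ℝ)) := convex_Ioi 0
  have hmc : ContinuousOn m (Ioi 0) := hm_c2.continuousOn
  have hmd : DifferentiableOn ℝ m (Ioi 0) := hm_c2.differentiableOn (by norm_num)
  have hd1 : ContDiffOn ℝ 1 (deriv m) (Ioi 0) :=
    hm_c2.deriv_of_isOpen isOpen_Ioi (by norm_num)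
  have hdc : ContinuousOn (deriv m) (Ioi 0) := hd1.continuousOn
  have hdd : DifferentiableOn ℝ (deriv m) (Ioi 0) := hd1.differentiableOn (by norm_num)
  -- the derivative of m is antitone on (0,∞)
  have hanti : AntitoneOn (deriv m) (Ioi 0) := by
    refine antitoneOn_of_deriv_nonpos hconv hdc ?_ ?_
    · rw [interior_Ioi]; exact hdd
    · intro x hx; rw [interior_Ioi] at hx; exact hm_conc x hx
  -- tangent-line upper bound from the mean value theorem
  have hMVT : ∀ a b : ℝ, 0 < a → a < b → m b ≤ m a + deriv m a * (b - a) := by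
    intro a b ha hab
    have hsub1 : Icc a b ⊆ Ioi 0 := fun x hx => lt_of_lt_of_le ha hx.1
    have hsub2 : Ioo a b ⊆ Ioi 0 := fun x hx => lt_trans ha hx.1
    obtain ⟨c, hc, hceq⟩ := exists_deriv_eq_slope m hab (hmc.mono hsub1) (hmd.mono hsub2)
    have hca : deriv m c ≤ deriv m a := hanti (mem_Ioi.mpr ha) (hsub2 hc) hc.1.le
    rw [hceq] at hca
    have hba : 0 < b - a := by linarith
    rw [div_le_iff₀ hba] at hca
    linarith
  -- the derivative of m is nonnegative on (0,∞)
  have hdnn : ∀ a : ℝ, 0 < a → 0 ≤ deriv m a := by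
    intro a ha
    by_contra h
    push_neg at h
    have hd0 : deriv m a ≠ 0 := ne_of_lt h
    set t : ℝ := m a / (-deriv m a) with ht
    have hma : 0 < m a := hm_pos a ha
    have htpos : 0 < t := div_pos hma (by linarith)
    have hdt : deriv m a * t = -(m a) := by
      rw [ht]; field_simp
    have hb : a < a + t + 1 := by linarith
    have := hMVT a (a + t + 1) ha hb
    have hbpos : 0 < a + t + 1 := by linarith
    have := hm_pos (a + t + 1) hbpos
    have : m (a + t + 1) ≤ deriv m a := by
      have h2 : deriv m a * (a + t + 1 - a) = -(m a) + deriv m a := by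
        have : a + t + 1 - a = t + 1 := by ring
        rw [this, mul_add, hdt, mul_one]
      linarith [hMVT a (a + t + 1) ha hb]
    linarith
  -- m is monotone on (0,∞)
  have hmono : MonotoneOn m (Ioi 0) := by
    refine monotoneOn_of_deriv_nonneg hconv hmc ?_ ?_
    · rw [interior_Ioi]; exact hmd
    · intro x hx; rw [interior_Ioi] at hx; exact hdnn x hx
  set B := deriv m zs with hBdef
  have hB : 0 ≤ B := hdnn zs hzs0
  set K := m zs + B with hKdef
  have hmzs0 : 0 < m zs := hm_pos zs hzs0
  have hK : 0 < K := by positivity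
  set C := Real.sqrt (K / 2) with hCdef
  have hC : 0 < C := Real.sqrt_pos.mpr (by positivity)
  set c0 := Real.sqrt (2 / K) with hc0def
  have hc0 : 0 < c0 := Real.sqrt_pos.mpr (by positivity)
  have hc0C : c0 * C = 1 := by
    rw [hc0def, hCdef, ← Real.sqrt_mul (by positivity)]
    rw [show (2 / K) * (K / 2) = 1 by field_simp]
    exact Real.sqrt_one
  refine ⟨C, hC, ?_⟩
  intro δ hδ zδ hzδ hmzδ g h1 h2 w hw
  have hδ0 : 0 < δ := hδ.1
  have hδbar' : δ < δbar := hδ.2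
  -- g 0 = 0
  have hg0 : g 0 = 0 := by
    have := h1 0 le_rfl
    simpa [Set.Ioo_self] using this
  obtain ⟨hgw0, hgw⟩ := h2 w hw
  set z := g w with hzdef
  set F : ℝ → ℝ := fun r => Real.sqrt (2 / (m (r + zδ) - δ)) with hFdef
  by_cases hF : IntegrableOn F (Ioo 0 z) volume
  · -- main case
    have hzδzs : zδ < zs := by
      by_contra h
      push_neg at h
      have := hmono (mem_Ioi.mpr hzs0) (mem_Ioi.mpr hzδ) h
      rw [hmzδ] at this
      linarith
    -- strict positivity: m x > δ for x > zδ
    have hpos : ∀ x : ℝ, zδ < x → δ < m x := by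
      intro x hx
      have hx0 : 0 < x := lt_trans hzδ hx
      rcases lt_or_ge x zs with hxz | hxz
      · by_contra h
        push_neg at h
        have hge : δ ≤ m x := by
          have := hmono (mem_Ioi.mpr hzδ) (mem_Ioi.mpr hx0) hx.le
          rwa [hmzδ] at this
        have heq : m x = δ := le_antisymm h hge
        have hsub1 : Icc zδ x ⊆ Ioi 0 := fun y hy => lt_of_lt_of_le hzδ hy.1
        have hsub2 : Ioo zδ x ⊆ Ioi 0 := fun y hy => lt_trans hzδ hy.1
        obtain ⟨c2, hc2, he2⟩ := exists_deriv_eq_slope m hx (hmc.mono hsub1) (hmd.mono hsub2)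
        have hsub3 : Icc x zs ⊆ Ioi 0 := fun y hy => lt_of_lt_of_le hx0 hy.1
        have hsub4 : Ioo x zs ⊆ Ioi 0 := fun y hy => lt_trans hx0 hy.1
        obtain ⟨c1, hc1, he1⟩ := exists_deriv_eq_slope m hxz (hmc.mono hsub3) (hmd.mono hsub4)
        have hc2z : deriv m c2 = 0 := by
          rw [he2, heq, hmzδ, sub_self, zero_div]
        have hc1pos : 0 < deriv m c1 := by
          rw [he1, heq]
          exact div_pos (by linarith) (by linarith [hc1.1, hc1.2])
        have : deriv m c1 ≤ deriv m c2 :=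
          hanti (hsub2 hc2) (hsub4 hc1) (by linarith [hc2.2, hc1.1])
        rw [hc2z] at this
        linarith
      · have := hmono (mem_Ioi.mpr hzs0) (mem_Ioi.mpr hx0) hxz
        linarith
    -- linear upper bound on m_δ
    have hlin : ∀ r : ℝ, 0 ≤ r → m (r + zδ) - δ ≤ K * (1 + r) := by
      intro r hr
      have hb1 : m (r + zδ) ≤ m (r + zs) :=
        hmono (mem_Ioi.mpr (by linarith)) (mem_Ioi.mpr (by linarith)) (by linarith)
      have hb2 : m (r + zs) ≤ m zs + B * r := by
        rcases eq_or_lt_of_le hr with h | h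
        · rw [← h]; simp
        · have := hMVT zs (r + zs) hzs0 (by linarith)
          have he : r + zs - zs = r := by ring
          rw [he] at this
          exact this
      nlinarith
    -- pointwise lower bound on the integrand
    have hpt : ∀ r ∈ Ioo (0:ℝ) z, c0 / (1 + r) ≤ F r := by
      intro r hr
      have hr0 : 0 < r := hr.1
      have hmδ : 0 < m (r + zδ) - δ := by
        have := hpos (r + zδ) (by linarith)
        linarith
      rw [hFdef]
      rw [Real.le_sqrt (by positivity) (by positivity)]
      have hc0sq : c0 ^ 2 = 2 / K := Real.sq_sqrt (by positivity)
      rw [div_pow, hc0sq, div_div, div_le_div_iff₀ (by positivity) hmδ]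
      have hl := hlin r hr0.le
      have e1 : 2 / K * K = 2 := by field_simp
      nlinarith [sq_nonneg (1 + r), hr0.le, hK, mul_pos hK (mul_pos (by linarith : (0:ℝ) < 1 + r) hr0)]
    -- integrability of the lower bound
    have hz0 : 0 ≤ z := hgw0
    have hG : IntegrableOn (fun r : ℝ => c0 / (1 + r)) (Ioo 0 z) volume := by
      have hcont : ContinuousOn (fun r : ℝ => c0 / (1 + r)) (Icc 0 z) := by
        apply ContinuousOn.div continuousOn_const (by fun_prop)
        intro x hx
        have := hx.1
        positivity
      exact (hcont.integrableOn_Icc).mono_set Ioo_subset_Icc_self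
    have hcomp : (∫ r in Ioo (0:ℝ) z, c0 / (1 + r)) ≤ w := by
      rw [← hgw]
      exact setIntegral_mono_on hG hF measurableSet_Ioo hpt
    have hval : (∫ r in Ioo (0:ℝ) z, c0 / (1 + r)) = c0 * Real.log (1 + z) := by
      rw [← integral_Ioc_eq_integral_Ioo, ← intervalIntegral.integral_of_le hz0]
      simp_rw [div_eq_mul_inv]
      rw [intervalIntegral.integral_const_mul]
      rw [intervalIntegral.integral_comp_add_left (fun x : ℝ => x⁻¹) 1]
      rw [integral_inv (by
        intro h
        rcases h with h
        simp only [Set.mem_uIcc] at h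
        rcases h with ⟨h1, _⟩ | ⟨_, h2⟩ <;> linarith)]
      norm_num
    have hlog : Real.log (1 + z) ≤ C * w := by
      have h3 : c0 * Real.log (1 + z) ≤ w := by rw [← hval]; exact hcomp
      calc Real.log (1 + z) = C * (c0 * Real.log (1 + z)) := by
            rw [← mul_assoc, mul_comm C c0, hc0C, one_mul]
        _ ≤ C * w := mul_le_mul_of_nonneg_left h3 hC.le
    have hfin : 1 + z ≤ Real.exp (C * w) := by
      have h1z : (0:ℝ) < 1 + z := by linarith
      calc 1 + z = Real.exp (Real.log (1 + z)) := (Real.exp_log h1z).symm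
        _ ≤ Real.exp (C * w) := Real.exp_le_exp.mpr hlog
    linarith
  · -- non-integrable case: then w = 0 and g w = 0
    have hw0 : w = 0 := by rw [← hgw, integral_undef hF]
    rw [hzdef, show g w = 0 by rw [hw0]; exact hg0, hw0]
    simp
end

section
/- Let S = ∞ and m satisfy (M), let (δ_k)_{k∈ℕ} be a vanishing sequence in (0, δ̄) with δ̄ < sup m, and set g := f^{−1} and g_{δ_k} := f_{δ_k}^{−1}, where z_{δ_k} is the unique solution of m(z) = δ_k, m_{δ_k}(z) := m(z + z_{δ_k}) − δ_k and f_{δ_k}(z) := ∫₀^z √(2/m_{δ_k}(r)) dr. Then there exists a subsequence of (g_{δ_k})_{k∈ℕ} that converges locally uniformly on [0,∞) to g. -/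
open MeasureTheory Set Filter Topology


open MeasureTheory Set Filter Topology

noncomputable def Fint (s : ℝ → ℝ) (z : ℝ) : ℝ := ∫ r in Ioo (0:ℝ) z, s r

lemma Fint_zero (s : ℝ → ℝ) : Fint s 0 = 0 := by
  simp [Fint]

lemma Fint_nonneg {s : ℝ → ℝ} (hnn : ∀ r, 0 ≤ s r) (z : ℝ) : 0 ≤ Fint s z :=
  setIntegral_nonneg measurableSet_Ioo fun x _ => hnn x

lemma Fint_strictMono {s : ℝ → ℝ} (hpos : ∀ r, 0 < r → 0 < s r) (hnn : ∀ r, 0 ≤ s r)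
    (hint : ∀ z, 0 < z → IntegrableOn s (Ioo 0 z)) :
    StrictMonoOn (Fint s) (Ici 0) := by
  intro u hu v hv huv
  have hu0 : (0:ℝ) ≤ u := hu
  have hv0 : (0:ℝ) ≤ v := hv
  have hIuv : IntegrableOn s (Ioc u v) := by
    refine (hint (v+1) (by linarith)).mono_set ?_
    intro x hx
    exact ⟨lt_of_le_of_lt hu0 hx.1, lt_of_le_of_lt hx.2 (by linarith)⟩
  have hIu : IntegrableOn s (Ioc 0 u) := by
    rcases eq_or_lt_of_le hu0 with h | h
    · simp [← h]
    · exact (hint (v+1) (by linarith)).mono_set fun x hx =>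
        ⟨hx.1, lt_of_le_of_lt hx.2 (by linarith)⟩
  have e : ∀ z, 0 ≤ z → Fint s z = ∫ r in (0:ℝ)..z, s r := by
    intro z hz
    rw [intervalIntegral.integral_of_le hz, integral_Ioc_eq_integral_Ioo, Fint]
  rw [e u hu0, e v hv0]
  have h1 : IntervalIntegrable s volume 0 u :=
    (intervalIntegrable_iff_integrableOn_Ioc_of_le hu0).2 hIu
  have h2 : IntervalIntegrable s volume u v :=
    (intervalIntegrable_iff_integrableOn_Ioc_of_le huv.le).2 hIuv
  have hadd := intervalIntegral.integral_add_adjacent_intervals h1 h2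
  have hposint : 0 < ∫ r in u..v, s r :=
    intervalIntegral.intervalIntegral_pos_of_pos_on h2
      (fun x hx => hpos x (lt_of_le_of_lt hu0 hx.1)) huv
  linarith

lemma concave_four_point {m : ℝ → ℝ} (hc : ConcaveOn ℝ (Ioi 0) m) {a b r : ℝ}
    (ha : 0 < a) (hab : a ≤ b) (hr : 0 < r) :
    m a + m (b + r) ≤ m (a + r) + m b := by
  have hb : 0 < b := lt_of_lt_of_le ha hab
  set t : ℝ := (b - a) / (b + r - a) with ht_def
  have hden : 0 < b + r - a := by linarith
  have ht0 : 0 ≤ t := div_nonneg (by linarith) hden.le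
  have ht1 : 0 ≤ 1 - t := by
    have : t ≤ 1 := (div_le_one hden).2 (by linarith)
    linarith
  have hsum : t + (1 - t) = 1 := by ring
  have hsum' : (1 - t) + t = 1 := by ring
  have hmem1 : a ∈ Ioi (0:ℝ) := ha
  have hmem2 : b + r ∈ Ioi (0:ℝ) := by simp [Ioi]; linarith
  have h1 := hc.2 hmem1 hmem2 ht0 ht1 hsum
  have h2 := hc.2 hmem1 hmem2 ht1 ht0 hsum'
  simp only [smul_eq_mul] at h1 h2
  have e1 : t * a + (1 - t) * (b + r) = a + r := by
    rw [ht_def]; field_simp; ring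
  have e2 : (1 - t) * a + t * (b + r) = b := by
    rw [ht_def]; field_simp; ring
  rw [e1] at h1
  rw [e2] at h2
  nlinarith
lemma inverse_facts (s : ℝ → ℝ) (g : ℝ → ℝ)
    (hpos : ∀ r, 0 < r → 0 < s r) (hnn : ∀ r, 0 ≤ s r)
    (hleft : ∀ z, 0 ≤ z → g (Fint s z) = z)
    (hright : ∀ w, 0 ≤ w → 0 ≤ g w ∧ Fint s (g w) = w) :
    (∀ z, 0 < z → IntegrableOn s (Ioo 0 z)) ∧ StrictMonoOn (Fint s) (Ici 0) ∧
      MonotoneOn g (Ici 0) ∧ g 0 = 0 := by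
  have hg0 : g 0 = 0 := by
    have := hleft 0 le_rfl
    rwa [Fint_zero] at this
  have hint : ∀ z, 0 < z → IntegrableOn s (Ioo 0 z) := by
    intro z hz
    by_contra hni
    have h0 : Fint s z = 0 := integral_undef hni
    have := hleft z hz.le
    rw [h0, hg0] at this
    exact absurd this.symm hz.ne'
  have hsm : StrictMonoOn (Fint s) (Ici 0) := Fint_strictMono hpos hnn hint
  refine ⟨hint, hsm, ?_, hg0⟩
  intro w1 hw1 w2 hw2 hle
  by_contra hlt
  push_neg at hlt
  have h1 := hright w1 hw1
  have h2 := hright w2 hw2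
  have := hsm h2.1 h1.1 hlt
  rw [h1.2, h2.2] at this
  exact absurd hle (not_le.2 this)


/-- Let `S = ∞`, `m` satisfy (M), `(δ_k)` a vanishing sequence in
`(0,δ̄)` with `δ̄ < sup m`, `z_{δ_k}` the unique solution of `m(z) = δ_k`,
`m_{δ_k}(z) := m(z + z_{δ_k}) − δ_k`, `f_{δ_k}(z) := ∫₀^z √(2/m_{δ_k}(r)) dr`,
`g := f⁻¹` and `g_{δ_k} := f_{δ_k}⁻¹`. Then a subsequence of `(g_{δ_k})` converges
locally uniformly on `[0,∞)` to `g`. -/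
theorem inverses_converge_locally_uniformly
    (m : ℝ → ℝ)
    (hm_c2 : ContDiffOn ℝ 2 m (Ioi 0))
    (hm_pos : ∀ z : ℝ, 0 < z → 0 < m z)
    (hm_conc : ∀ z : ℝ, 0 < z → deriv (deriv m) z ≤ 0)
    (hm0 : Tendsto m (𝓝[>] (0 : ℝ)) (𝓝 0))
    (δbar : ℝ) (hδbar : 0 < δbar)
    (hδbarsup : ∃ z : ℝ, 0 < z ∧ δbar < m z)
    (δ : ℕ → ℝ) (hδmem : ∀ k, δ k ∈ Ioo (0 : ℝ) δbar)
    (hδ0 : Tendsto δ atTop (𝓝 0))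
    (zδ : ℕ → ℝ) (hzδ : ∀ k, 0 < zδ k ∧ m (zδ k) = δ k)
    (g : ℝ → ℝ)
    (hg_left : ∀ z : ℝ, 0 ≤ z →
      g (∫ r in Ioo (0 : ℝ) z, Real.sqrt (2 / m r)) = z)
    (hg_right : ∀ w : ℝ, 0 ≤ w → 0 ≤ g w ∧
      (∫ r in Ioo (0 : ℝ) (g w), Real.sqrt (2 / m r)) = w)
    (gδ : ℕ → ℝ → ℝ)
    (hgδ_left : ∀ k, ∀ z : ℝ, 0 ≤ z →
      gδ k (∫ r in Ioo (0 : ℝ) z, Real.sqrt (2 / (m (r + zδ k) - δ k))) = z)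
    (hgδ_right : ∀ k, ∀ w : ℝ, 0 ≤ w → 0 ≤ gδ k w ∧
      (∫ r in Ioo (0 : ℝ) (gδ k w), Real.sqrt (2 / (m (r + zδ k) - δ k))) = w) :
    ∃ φ : ℕ → ℕ, StrictMono φ ∧
      TendstoLocallyUniformlyOn (fun k => gδ (φ k)) g atTop (Ici 0) := by
  obtain ⟨zs, hzs_pos, hzs⟩ := hδbarsup
  -- concavity of m on (0,∞)
  have hconc : ConcaveOn ℝ (Ioi 0) m := by
    apply concaveOn_of_deriv2_nonpos (convex_Ioi 0) hm_c2.continuousOn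
    · rw [interior_Ioi]
      exact hm_c2.differentiableOn (by norm_num)
    · rw [interior_Ioi]
      exact (hm_c2.deriv_of_isOpen (m := 1) isOpen_Ioi (by norm_num)).differentiableOn one_ne_zero
    · intro x hx
      rw [interior_Ioi] at hx
      exact hm_conc x hx
  -- continuity at positive points
  have hcont : ∀ r : ℝ, 0 < r → ContinuousAt m r := fun r hr =>
    hm_c2.continuousOn.continuousAt (Ioi_mem_nhds hr)
  -- monotonicity of m on (0,∞)
  have hmono : ∀ a b : ℝ, 0 < a → a ≤ b → m a ≤ m b := by
    intro a b ha hab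
    rcases eq_or_lt_of_le hab with h | h
    · rw [h]
    have hev : ∀ᶠ x in atTop, (1 - (b - a) / (x - a)) * m a ≤ m b := by
      filter_upwards [eventually_gt_atTop b] with x hx
      have hb : 0 < b := lt_of_lt_of_le ha hab
      have hxa : 0 < x - a := by linarith
      set t : ℝ := (x - b) / (x - a) with htdef
      have ht0 : 0 ≤ t := div_nonneg (by linarith) hxa.le
      have ht1 : 0 ≤ 1 - t := by
        have : t ≤ 1 := (div_le_one hxa).2 (by linarith)
        linarith
      have hco := hconc.2 (mem_Ioi.2 ha) (mem_Ioi.2 (by linarith : (0:ℝ) < x)) ht0 ht1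
        (by ring)
      have e : t • a + (1 - t) • x = b := by
        simp only [smul_eq_mul, htdef]
        field_simp
        ring
      rw [e] at hco
      simp only [smul_eq_mul] at hco
      have hmx : 0 ≤ (1 - t) * m x :=
        mul_nonneg ht1 (hm_pos x (by linarith)).le
      have e2 : 1 - (b - a) / (x - a) = t := by
        rw [htdef]; field_simp; ring
      rw [e2]
      linarith
    have hlim : Tendsto (fun x : ℝ => (1 - (b - a) / (x - a)) * m a) atTop
        (𝓝 ((1 - 0) * m a)) := by
      refine Tendsto.mul_const _ (tendsto_const_nhds.sub ?_)
      exact Tendsto.div_atTop tendsto_const_nhds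
        (tendsto_atTop_add_const_right _ (-a) tendsto_id)
    have := le_of_tendsto hlim hev
    simpa using this
  -- zδ k < zs
  have hzlt : ∀ k, zδ k < zs := by
    intro k
    by_contra h
    push_neg at h
    have := hmono zs (zδ k) hzs_pos h
    rw [(hzδ k).2] at this
    have := (hδmem k).2
    linarith
  -- zδ → 0
  have hz0 : Tendsto zδ atTop (𝓝 0) := by
    rw [tendsto_order]
    constructor
    · intro l hl
      exact Eventually.of_forall fun k => lt_trans hl (hzδ k).1
    · intro u hu
      have hmem : Iio (m u) ∈ 𝓝 (0:ℝ) := Iio_mem_nhds (hm_pos u hu)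
      filter_upwards [hδ0 hmem] with k hk
      by_contra h
      push_neg at h
      have := hmono u (zδ k) hu h
      rw [(hzδ k).2] at this
      exact absurd hk (not_lt.2 this)
  -- key slope lower bound
  have hkey : ∀ k (R r : ℝ), 0 < r → zδ k + r ≤ R →
      r / (R - zδ k) * (m R - δ k) ≤ m (r + zδ k) - δ k := by
    intro k R r hr hR
    have hzk := (hzδ k).1
    have hden : 0 < R - zδ k := by linarith
    set t : ℝ := (R - zδ k - r) / (R - zδ k) with htdef
    have ht0 : 0 ≤ t := div_nonneg (by linarith) hden.le
    have ht1 : 0 ≤ 1 - t := by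
      have : t ≤ 1 := (div_le_one hden).2 (by linarith)
      linarith
    have hco := hconc.2 (mem_Ioi.2 hzk) (mem_Ioi.2 (by linarith : (0:ℝ) < R)) ht0 ht1
      (by ring)
    have e : t • zδ k + (1 - t) • R = r + zδ k := by
      simp only [smul_eq_mul, htdef]
      field_simp
      ring
    rw [e] at hco
    simp only [smul_eq_mul] at hco
    rw [(hzδ k).2] at hco
    have e2 : 1 - t = r / (R - zδ k) := by
      rw [htdef]; field_simp; ring
    rw [← e2]
    have expand : (1 - t) * (m R - δ k) = t * δ k + (1 - t) * m R - δ k := by ring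
    rw [expand]
    linarith
  -- positivity of shifted m
  have hmδpos : ∀ k (r : ℝ), 0 < r → 0 < m (r + zδ k) - δ k := by
    intro k r hr
    have h1 := hkey k (zs + r) r hr (by linarith [hzlt k])
    have h2 : m zs ≤ m (zs + r) := hmono zs (zs + r) hzs_pos (by linarith)
    have h3 : 0 < r / (zs + r - zδ k) := div_pos hr (by linarith [hzlt k])
    have h4 : 0 < m (zs + r) - δ k := by
      have := (hδmem k).2
      linarith
    nlinarith
  -- subadditivity bound
  have hsub : ∀ k (r : ℝ), 0 < r → m (r + zδ k) - δ k ≤ m r := by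
    intro k r hr
    have hzk := (hzδ k).1
    have hev : ∀ᶠ ε in 𝓝[>] (0:ℝ), m (r + zδ k) - δ k ≤ m (ε + r) - m ε := by
      filter_upwards [Ioc_mem_nhdsGT_of_mem (by constructor <;> [exact le_rfl; exact hzk])]
        with ε hε
      have h4 := concave_four_point hconc hε.1 hε.2 hr
      rw [(hzδ k).2] at h4
      have : zδ k + r = r + zδ k := by ring
      rw [this] at h4
      linarith
    have hlim : Tendsto (fun ε => m (ε + r) - m ε) (𝓝[>] (0:ℝ)) (𝓝 (m r - 0)) := by
      refine Tendsto.sub ?_ hm0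
      have h1 : Tendsto (fun ε : ℝ => ε + r) (𝓝[>] (0:ℝ)) (𝓝 r) := by
        have : Tendsto (fun ε : ℝ => ε + r) (𝓝 (0:ℝ)) (𝓝 (0 + r)) :=
          (continuous_id.add continuous_const).tendsto 0
        rw [zero_add] at this
        exact this.mono_left nhdsWithin_le_nhds
      exact (hcont r hr).tendsto.comp h1
    have := ge_of_tendsto hlim hev
    linarith
  -- integrands
  set sm : ℝ → ℝ := fun r => Real.sqrt (2 / m r) with hsmdef
  set sδ : ℕ → ℝ → ℝ := fun k r => Real.sqrt (2 / (m (r + zδ k) - δ k)) with hsδdef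
  have hsmnn : ∀ r, 0 ≤ sm r := fun r => Real.sqrt_nonneg _
  have hsδnn : ∀ k r, 0 ≤ sδ k r := fun k r => Real.sqrt_nonneg _
  have hsmpos : ∀ r, 0 < r → 0 < sm r := fun r hr =>
    Real.sqrt_pos.2 (div_pos (by norm_num) (hm_pos r hr))
  have hsδpos : ∀ k r, 0 < r → 0 < sδ k r := fun k r hr =>
    Real.sqrt_pos.2 (div_pos (by norm_num) (hmδpos k r hr))
  obtain ⟨hintm, hFsm, hgmono, hg0⟩ :=
    inverse_facts sm g hsmpos hsmnn (fun z hz => hg_left z hz) (fun w hw => hg_right w hw)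
  have hinv : ∀ k, (∀ z, 0 < z → IntegrableOn (sδ k) (Ioo 0 z)) ∧
      StrictMonoOn (Fint (sδ k)) (Ici 0) ∧ MonotoneOn (gδ k) (Ici 0) ∧ gδ k 0 = 0 :=
    fun k => inverse_facts (sδ k) (gδ k) (hsδpos k) (hsδnn k)
      (fun z hz => hgδ_left k z hz) (fun w hw => hgδ_right k w hw)
  -- F ≤ Fδ
  have hFle : ∀ k (z : ℝ), 0 ≤ z → Fint sm z ≤ Fint (sδ k) z := by
    intro k z hz
    rcases eq_or_lt_of_le hz with h | h
    · rw [← h, Fint_zero, Fint_zero]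
    refine setIntegral_mono_on (hintm z h) ((hinv k).1 z h) measurableSet_Ioo ?_
    intro r hr
    have h1 := hmδpos k r hr.1
    have h2 := hsub k r hr.1
    exact Real.sqrt_le_sqrt (by gcongr)
  -- gδ ≤ g
  have hgle : ∀ k (w : ℝ), 0 ≤ w → gδ k w ≤ g w := by
    intro k w hw
    by_contra h
    push_neg at h
    have hgd := hgδ_right k w hw
    have hgw := hg_right w hw
    have h1 : Fint (sδ k) (g w) < Fint (sδ k) (gδ k w) :=
      (hinv k).2.1 (mem_Ici.2 hgw.1) (mem_Ici.2 hgd.1) h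
    have h2 : Fint (sδ k) (gδ k w) = w := hgd.2
    have h3 : Fint sm (g w) = w := hgw.2
    have h4 := hFle k (g w) hgw.1
    rw [h3] at h4
    rw [h2] at h1
    linarith
  -- dominated convergence
  have hDC : ∀ z' : ℝ, 0 < z' →
      Tendsto (fun k => Fint (sδ k) z') atTop (𝓝 (Fint sm z')) := by
    intro z' hz'
    set R : ℝ := zs + z' with hRdef
    have hR0 : 0 < R := by linarith
    set c : ℝ := (m zs - δbar) / R with hcdef
    have hnum : 0 < m zs - δbar := by linarith
    have hc : 0 < c := div_pos hnum hR0
    have hcr : ∀ k (r : ℝ), r ∈ Ioo (0:ℝ) z' → c * r ≤ m (r + zδ k) - δ k := by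
      intro k r hr
      have hk1 := hkey k R r hr.1 (by simp only [hRdef]; linarith [hzlt k, hr.2])
      have hfrac : (m zs - δbar) / R ≤ (m R - δ k) / (R - zδ k) := by
        refine div_le_div₀ ?_ ?_ (by linarith [hzlt k]) (by linarith [(hzδ k).1])
        · have := (hδmem k).2
          have := hmono zs R hzs_pos (by linarith)
          linarith
        · have := (hδmem k).2
          have := hmono zs R hzs_pos (by linarith)
          linarith
      calc c * r = r * ((m zs - δbar) / R) := by rw [hcdef]; ring
        _ ≤ r * ((m R - δ k) / (R - zδ k)) :=
            mul_le_mul_of_nonneg_left hfrac hr.1.le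
        _ = r / (R - zδ k) * (m R - δ k) := by ring
        _ ≤ _ := hk1
    have hmeas : ∀ k, AEStronglyMeasurable (sδ k) (volume.restrict (Ioo 0 z')) :=
      fun k => ((hinv k).1 z' hz').aestronglyMeasurable
    have hbound_int : IntegrableOn (fun r : ℝ => Real.sqrt (2 / c) * r ^ (-(1/2) : ℝ))
        (Ioo 0 z') volume := by
      have h1 : IntervalIntegrable (fun x : ℝ => x ^ (-(1/2) : ℝ)) volume 0 z' :=
        intervalIntegral.intervalIntegrable_rpow' (by norm_num)
      have h2 : IntegrableOn (fun x : ℝ => x ^ (-(1/2) : ℝ)) (Ioc 0 z') :=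
        (intervalIntegrable_iff_integrableOn_Ioc_of_le hz'.le).1 h1
      exact (h2.mono_set Ioo_subset_Ioc_self).const_mul _
    show Tendsto (fun k => ∫ r in Ioo (0:ℝ) z', sδ k r) atTop
      (𝓝 (∫ r in Ioo (0:ℝ) z', sm r))
    refine tendsto_integral_of_dominated_convergence _ hmeas hbound_int ?_ ?_
    · intro k
      rw [ae_restrict_iff' measurableSet_Ioo]
      refine ae_of_all _ fun r hr => ?_
      have h1 := hcr k r hr
      have hcrpos : 0 < c * r := mul_pos hc hr.1
      have hnorm : ‖sδ k r‖ = sδ k r := by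
        rw [Real.norm_eq_abs, abs_of_nonneg (hsδnn k r)]
      rw [hnorm]
      have hstep2 : Real.sqrt (2 / (c * r)) = Real.sqrt (2 / c) * r ^ (-(1/2) : ℝ) := by
        rw [Real.rpow_neg hr.1.le, ← Real.sqrt_eq_rpow, ← Real.sqrt_inv,
          ← Real.sqrt_mul (by positivity : (0:ℝ) ≤ 2 / c)]
        congr 1
        field_simp
      rw [← hstep2]
      exact Real.sqrt_le_sqrt (div_le_div_of_nonneg_left (by norm_num) hcrpos h1)
    · rw [ae_restrict_iff' measurableSet_Ioo]
      refine ae_of_all _ fun r hr => ?_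
      have h1 : Tendsto (fun k => r + zδ k) atTop (𝓝 (r + 0)) :=
        tendsto_const_nhds.add hz0
      rw [add_zero] at h1
      have h2 : Tendsto (fun k => m (r + zδ k) - δ k) atTop (𝓝 (m r - 0)) :=
        (((hcont r hr.1).tendsto.comp h1)).sub hδ0
      rw [sub_zero] at h2
      have h3 : ContinuousAt (fun p : ℝ => Real.sqrt (2 / p)) (m r) := by
        have hd : ContinuousAt (fun p : ℝ => 2 / p) (m r) :=
          continuousAt_const.div continuousAt_id (hm_pos r hr.1).ne'
        exact Real.continuous_sqrt.continuousAt.comp hd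
      exact h3.tendsto.comp h2
  -- pointwise convergence
  have hptwise : ∀ w : ℝ, 0 ≤ w → Tendsto (fun k => gδ k w) atTop (𝓝 (g w)) := by
    intro w hw
    rw [tendsto_order]
    constructor
    · intro l hl
      rcases lt_or_ge l 0 with h | h
      · exact Eventually.of_forall fun k => lt_of_lt_of_le h (hgδ_right k w hw).1
      · set z' : ℝ := (l + g w) / 2 with hz'def
        have hlz : l < z' := by rw [hz'def]; linarith
        have hzg : z' < g w := by rw [hz'def]; linarith
        have hz'0 : 0 < z' := lt_of_le_of_lt h hlz
        have hFgw : Fint sm (g w) = w := (hg_right w hw).2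
        have hFlt : Fint sm z' < w := by
          have := hFsm (mem_Ici.2 hz'0.le) (mem_Ici.2 (hg_right w hw).1) hzg
          rwa [hFgw] at this
        have hev := (hDC z' hz'0).eventually_lt_const hFlt
        filter_upwards [hev] with k hk
        have hstep : z' < gδ k w := by
          by_contra hcon
          push_neg at hcon
          have h5 : Fint (sδ k) (gδ k w) ≤ Fint (sδ k) z' :=
            ((hinv k).2.1).monotoneOn (mem_Ici.2 (hgδ_right k w hw).1)
              (mem_Ici.2 hz'0.le) hcon
          have h6 : Fint (sδ k) (gδ k w) = w := (hgδ_right k w hw).2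
          rw [h6] at h5
          linarith
        linarith
    · intro u hu
      exact Eventually.of_forall fun k => lt_of_le_of_lt (hgle k w hw) hu
  -- conclusion
  refine ⟨id, strictMono_id, ?_⟩
  rw [Metric.tendstoLocallyUniformlyOn_iff]
  intro ε hε x hx
  have hx0 : (0:ℝ) ≤ x := hx
  set ε' : ℝ := ε / 4 with hε'def
  have hε' : 0 < ε' := by rw [hε'def]; linarith
  set z : ℝ := g x with hzdef
  have hz0' : 0 ≤ z := (hg_right x hx0).1
  have hFgx : Fint sm z = x := (hg_right x hx0).2
  set a0 : ℝ := max 0 (z - ε') with ha0def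
  have ha00 : 0 ≤ a0 := le_max_left _ _
  have ha0z : a0 ≤ z := max_le hz0' (by linarith)
  set a : ℝ := Fint sm a0 with hadef
  set b : ℝ := Fint sm (z + ε') with hbdef
  have ha_nonneg : 0 ≤ a := Fint_nonneg hsmnn _
  have hb_nonneg : 0 ≤ b := Fint_nonneg hsmnn _
  have hga : g a = a0 := hg_left a0 ha00
  have hgb : g b = z + ε' := hg_left (z + ε') (by linarith)
  have hax : a ≤ x := by
    rw [← hFgx]
    exact hFsm.monotoneOn (mem_Ici.2 ha00) (mem_Ici.2 hz0') ha0z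
  have hxb : x < b := by
    rw [← hFgx]
    exact hFsm (mem_Ici.2 hz0') (mem_Ici.2 (by linarith)) (by linarith)
  refine ⟨Icc a b ∩ Ici 0, ?_, ?_⟩
  · rw [mem_nhdsWithin]
    rcases le_or_gt (z - ε') 0 with hcase | hcase
    · have ha0eq : a0 = 0 := max_eq_left hcase
      have haeq : a = 0 := by rw [hadef, ha0eq, Fint_zero]
      refine ⟨Iio b, isOpen_Iio, hxb, ?_⟩
      rintro y ⟨hy1, hy2⟩
      exact ⟨⟨haeq ▸ hy2, hy1.le⟩, hy2⟩
    · have ha0eq : a0 = z - ε' := max_eq_right hcase.le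
      have haltx : a < x := by
        rw [← hFgx]
        refine hFsm (mem_Ici.2 ha00) (mem_Ici.2 hz0') ?_
        rw [ha0eq]; linarith
      refine ⟨Ioo a b, isOpen_Ioo, ⟨haltx, hxb⟩, ?_⟩
      rintro y ⟨⟨hy1, hy2⟩, hy3⟩
      exact ⟨⟨hy1.le, hy2.le⟩, hy3⟩
  · have hconva := Metric.tendsto_nhds.1 (hptwise a ha_nonneg) ε' hε'
    have hconvb := Metric.tendsto_nhds.1 (hptwise b hb_nonneg) ε' hε'
    filter_upwards [hconva, hconvb] with k hka hkb
    rintro y ⟨⟨hya, hyb⟩, hy0⟩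
    have hgya : g a ≤ g y := hgmono (mem_Ici.2 ha_nonneg) hy0 hya
    have hgyb : g y ≤ g b := hgmono hy0 (mem_Ici.2 hb_nonneg) hyb
    have hgdya : gδ k a ≤ gδ k y := (hinv k).2.2.1 (mem_Ici.2 ha_nonneg) hy0 hya
    have hgdyb : gδ k y ≤ gδ k b := (hinv k).2.2.1 hy0 (mem_Ici.2 hb_nonneg) hyb
    have hgab : g b - g a ≤ 2 * ε' := by
      rw [hga, hgb]
      have h7 : z - ε' ≤ a0 := le_max_right _ _
      linarith
    simp only [id_eq]
    rw [Real.dist_eq] at hka hkb ⊢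
    rw [abs_sub_lt_iff] at hka hkb ⊢
    constructor
    · linarith [hka.2, hgab, hgyb, hgdya, hε']
    · linarith [hkb.1, hgab, hgya, hgdyb, hε']
end
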